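/- In the same setting (H a real inner product space of functions X → ℝ with reproducing kernel k; points x₁,…,x_{n+m}; L symmetric positive semidefinite; μ > 0 with μ⁻¹I + LK invertible; modified inner product ⟨f,g⟩_H̃ = ⟨f,g⟩_H + μ·f_Uᵀ L g_U; H̃_r = {f ∈ H : ⟨f,f⟩_H̃ ≤ r²}), the empirical Rademacher complexity on the first n points satisfies the lower bound (1/n)·E_σ[ sup over f ∈ H̃_r of Σᵢ₌₁ⁿ σᵢ·f(xᵢ) ] ≥ (r/(n·√2))·√( Σᵢ₌₁ⁿ [ k(xᵢ,xᵢ) − k_{xᵢ}ᵀ (μ⁻¹I + LK)⁻¹ L k_{xᵢ} ] ), where k_x = (k(x₁,x),…,k(x_{n+m},x))ᵀ and E_σ denotes the expectation over σ = (σ₁,…,σ_n) i.i.d. uniform on {−1,+1}. -/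

import Mathlib

namespace Stmt17Aux
open Finset
open scoped symmDiff

noncomputable def sgn (b : Bool) : ℝ := if b then 1 else -1

lemma sgn_mul_self (b : Bool) : sgn b * sgn b = 1 := by cases b <;> simp [sgn]
lemma sgn_not (b : Bool) : sgn (!b) = - sgn b := by cases b <;> simp [sgn]

variable {n : ℕ}

noncomputable def wal (A : Finset (Fin n)) (s : Fin n → Bool) : ℝ := ∏ i ∈ A, sgn (s i)

def flip (i : Fin n) (s : Fin n → Bool) : Fin n → Bool := Function.update s i (!(s i))

lemma flip_invol (i : Fin n) : Function.Involutive (flip i) := by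
  intro s; funext j
  by_cases h : j = i
  · subst h; simp [flip]
  · simp [flip, Function.update_of_ne h]

noncomputable def flipEquiv (i : Fin n) : (Fin n → Bool) ≃ (Fin n → Bool) :=
  (flip_invol i).toPerm

lemma flipEquiv_apply (i : Fin n) (s : Fin n → Bool) : flipEquiv i s = flip i s := rfl

def negAll (s : Fin n → Bool) : Fin n → Bool := fun j => !(s j)

lemma negAll_invol : Function.Involutive (negAll (n := n)) := by
  intro s; funext j; simp [negAll]

noncomputable def negEquiv : (Fin n → Bool) ≃ (Fin n → Bool) := negAll_invol.toPerm

lemma negEquiv_apply (s : Fin n → Bool) : negEquiv s = negAll s := rfl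

lemma wal_flip_mem {A : Finset (Fin n)} {i : Fin n} (hi : i ∈ A) (s : Fin n → Bool) :
    wal A (flip i s) = - wal A s := by
  unfold wal
  rw [← Finset.mul_prod_erase A _ hi, ← Finset.mul_prod_erase A (fun j => sgn (s j)) hi]
  have h1 : (flip i s) i = !(s i) := by simp [flip]
  have h2 : ∏ j ∈ A.erase i, sgn (flip i s j) = ∏ j ∈ A.erase i, sgn (s j) := by
    apply Finset.prod_congr rfl
    intro j hj
    have : j ≠ i := Finset.ne_of_mem_erase hj
    simp [flip, Function.update_of_ne this]
  rw [h1, h2, sgn_not]; ring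

lemma wal_flip_not_mem {A : Finset (Fin n)} {i : Fin n} (hi : i ∉ A) (s : Fin n → Bool) :
    wal A (flip i s) = wal A s := by
  unfold wal
  apply Finset.prod_congr rfl
  intro j hj
  have : j ≠ i := fun h => hi (h ▸ hj)
  simp [flip, Function.update_of_ne this]

lemma wal_negAll (A : Finset (Fin n)) (s : Fin n → Bool) :
    wal A (negAll s) = (-1) ^ A.card * wal A s := by
  unfold wal
  rw [← Finset.prod_const, ← Finset.prod_mul_distrib]
  apply Finset.prod_congr rfl
  intro j _
  simp [negAll, sgn_not]

lemma wal_mul (A B : Finset (Fin n)) (s : Fin n → Bool) :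
    wal A s * wal B s = wal (A ∆ B) s := by
  classical
  unfold wal
  rw [← Finset.prod_union_inter]
  have hu : A ∪ B = (A ∆ B) ∪ (A ∩ B) := by
    rw [← Finset.sup_eq_union, ← Finset.inf_eq_inter, ← Finset.sup_eq_union, symmDiff_sup_inf]
  have hd : Disjoint (A ∆ B) (A ∩ B) := by
    rw [← Finset.inf_eq_inter]
    exact disjoint_symmDiff_inf A B
  rw [hu, Finset.prod_union hd, mul_assoc, ← Finset.prod_mul_distrib]
  have : ∏ i ∈ A ∩ B, sgn (s i) * sgn (s i) = 1 := by
    apply Finset.prod_eq_one; intro i _; exact sgn_mul_self _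
  rw [this, mul_one]

lemma sum_wal (A : Finset (Fin n)) :
    ∑ s : Fin n → Bool, wal A s = if A = ∅ then (2 ^ n : ℝ) else 0 := by
  split_ifs with h
  · subst h
    simp [wal, Finset.card_univ]
  · obtain ⟨i, hi⟩ := Finset.nonempty_iff_ne_empty.2 h
    have h1 : ∑ s : Fin n → Bool, wal A s = ∑ s : Fin n → Bool, wal A (flipEquiv i s) :=
      (Equiv.sum_comp (flipEquiv i) (wal A)).symm
    have h2 : ∑ s : Fin n → Bool, wal A (flipEquiv i s) = - ∑ s : Fin n → Bool, wal A s := by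
      rw [← Finset.sum_neg_distrib]
      apply Finset.sum_congr rfl
      intro s _; rw [flipEquiv_apply, wal_flip_mem hi]
    linarith [h1, h2]

lemma wal_orth (A B : Finset (Fin n)) :
    ∑ s : Fin n → Bool, wal A s * wal B s = if A = B then (2 ^ n : ℝ) else 0 := by
  classical
  simp_rw [wal_mul]
  rw [sum_wal]
  congr 1
  simp [symmDiff_eq_bot, Finset.bot_eq_empty]

lemma wal_inv (s t : Fin n → Bool) :
    ∑ A : Finset (Fin n), wal A s * wal A t = if s = t then (2 ^ n : ℝ) else 0 := by
  classical
  have h1 : ∀ A : Finset (Fin n), wal A s * wal A t = ∏ i ∈ A, (sgn (s i) * sgn (t i)) := by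
    intro A; unfold wal; rw [Finset.prod_mul_distrib]
  have h2 : ∑ A : Finset (Fin n), wal A s * wal A t
      = ∏ i : Fin n, (sgn (s i) * sgn (t i) + 1) := by
    rw [Finset.prod_add]
    rw [Finset.powerset_univ]
    apply Finset.sum_congr rfl
    intro A _
    simp [h1]
  rw [h2]
  split_ifs with h
  · subst h
    have : ∀ i : Fin n, sgn (s i) * sgn (s i) + 1 = 2 := by
      intro i; rw [sgn_mul_self]; norm_num
    simp only [this]
    rw [Finset.prod_const]
    simp [Finset.card_univ]
  · obtain ⟨i, hi⟩ : ∃ i, s i ≠ t i := by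
      by_contra hc
      push_neg at hc
      exact h (funext hc)
    apply Finset.prod_eq_zero (Finset.mem_univ i)
    cases hs : s i <;> cases ht : t i <;> simp_all [sgn]

noncomputable def coef (f : (Fin n → Bool) → ℝ) (A : Finset (Fin n)) : ℝ :=
  ∑ s : Fin n → Bool, f s * wal A s

lemma parseval (f g : (Fin n → Bool) → ℝ) :
    ∑ A : Finset (Fin n), coef f A * coef g A = 2 ^ n * ∑ s : Fin n → Bool, f s * g s := by
  classical
  unfold coef
  simp_rw [Finset.sum_mul_sum]
  rw [Finset.sum_comm]
  have : ∀ s : Fin n → Bool, ∑ A : Finset (Fin n), ∑ t : Fin n → Bool,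
      f s * wal A s * (g t * wal A t) = 2 ^ n * (f s * g s) := by
    intro s
    rw [Finset.sum_comm]
    have h1 : ∀ t, ∑ A : Finset (Fin n), f s * wal A s * (g t * wal A t)
        = f s * g t * (if s = t then (2 ^ n : ℝ) else 0) := by
      intro t
      rw [← wal_inv s t, Finset.mul_sum]
      apply Finset.sum_congr rfl
      intro A _; ring
    simp_rw [h1, mul_ite, mul_zero]
    rw [Finset.sum_ite_eq]
    simp
    ring
  rw [Finset.sum_congr rfl (fun s _ => this s), ← Finset.mul_sum]



lemma coef_wal_empty (f : (Fin n → Bool) → ℝ) : coef f ∅ = ∑ s : Fin n → Bool, f s := by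
  unfold coef wal
  simp

lemma coef_sub (f g : (Fin n → Bool) → ℝ) (A : Finset (Fin n)) :
    coef (fun s => f s - g s) A = coef f A - coef g A := by
  unfold coef
  rw [← Finset.sum_sub_distrib]
  apply Finset.sum_congr rfl
  intro s _; ring

lemma coef_even_odd {f : (Fin n → Bool) → ℝ} (heven : ∀ s, f (negAll s) = f s)
    {A : Finset (Fin n)} (hodd : Odd A.card) : coef f A = 0 := by
  have h1 : coef f A = ∑ s : Fin n → Bool, f (negEquiv s) * wal A (negEquiv s) :=
    (Equiv.sum_comp negEquiv (fun s => f s * wal A s)).symm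
  have h2 : ∑ s : Fin n → Bool, f (negEquiv s) * wal A (negEquiv s) = - coef f A := by
    unfold coef
    rw [← Finset.sum_neg_distrib]
    apply Finset.sum_congr rfl
    intro s _
    rw [negEquiv_apply, heven, wal_negAll, hodd.neg_one_pow]
    ring
  linarith [h1.trans h2]

lemma coef_flip (f : (Fin n → Bool) → ℝ) (i : Fin n) (A : Finset (Fin n)) :
    coef (fun s => f (flip i s)) A = (if i ∈ A then -1 else 1) * coef f A := by
  classical
  have h1 : coef (fun s => f (flip i s)) A
      = ∑ s : Fin n → Bool, f (flip i (flipEquiv i s)) * wal A (flipEquiv i s) :=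
    (Equiv.sum_comp (flipEquiv i) (fun s => f (flip i s) * wal A s)).symm
  rw [h1]
  unfold coef
  split_ifs with hi
  · have h2 : ∀ s, f (flip i (flipEquiv i s)) * wal A (flipEquiv i s) = -(f s * wal A s) := by
      intro s
      rw [flipEquiv_apply, flip_invol i s, wal_flip_mem hi]
      ring
    simp_rw [h2]
    rw [Finset.sum_neg_distrib]
    ring
  · rw [one_mul]
    apply Finset.sum_congr rfl
    intro s _
    rw [flipEquiv_apply, flip_invol i s, wal_flip_not_mem hi]

theorem bilin_cs {E : Type*} [AddCommGroup E] [Module ℝ E] (B : E → E → ℝ)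
    (Bsymm : ∀ a b, B a b = B b a)
    (Baddl : ∀ a b c, B (a + b) c = B a c + B b c)
    (Bsmull : ∀ (t : ℝ) a b, B (t • a) b = t * B a b)
    (Bpos : ∀ a, 0 ≤ B a a) :
    ∀ a b, B a b ≤ Real.sqrt (B a a) * Real.sqrt (B b b) := by
  have Baddr : ∀ a b c, B a (b + c) = B a b + B a c := by
    intro a b c; rw [Bsymm, Baddl, Bsymm b a, Bsymm c a]
  have Bsmulr : ∀ (t : ℝ) a b, B a (t • b) = t * B a b := by
    intro t a b; rw [Bsymm, Bsmull, Bsymm b a]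
  have CS : ∀ a b, B a b * B a b ≤ B a a * B b b := by
    intro a b
    have key : ∀ t : ℝ, 0 ≤ B b b * (t * t) + (2 * B a b) * t + B a a := by
      intro t
      have h := Bpos (a + t • b)
      have hexp : B (a + t • b) (a + t • b)
          = B b b * (t * t) + (2 * B a b) * t + B a a := by
        rw [Baddl, Baddr, Baddr, Bsmull, Bsmulr, Bsmulr, Bsmull, Bsymm b a]
        ring
      linarith [hexp ▸ h]
    have hd := discrim_le_zero key
    rw [discrim] at hd
    nlinarith [hd]
  intro a b
  have h1 : B a b ≤ Real.sqrt (B a b * B a b) := by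
    rw [Real.sqrt_mul_self_eq_abs]; exact le_abs_self _
  have h2 : Real.sqrt (B a b * B a b) ≤ Real.sqrt (B a a * B b b) :=
    Real.sqrt_le_sqrt (CS a b)
  rw [Real.sqrt_mul (Bpos a)] at h2
  linarith

theorem kk {E : Type*} [AddCommGroup E] [Module ℝ E] (B : E → E → ℝ)
    (Bsymm : ∀ a b, B a b = B b a)
    (Baddl : ∀ a b c, B (a + b) c = B a c + B b c)
    (Bsmull : ∀ (t : ℝ) a b, B (t • a) b = t * B a b)
    (Bpos : ∀ a, 0 ≤ B a a)
    (w : Fin n → E) :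
    Real.sqrt (∑ i, B (w i) (w i)) / Real.sqrt 2 ≤
      (1 / 2 ^ n : ℝ) * ∑ s : Fin n → Bool,
        Real.sqrt (B (∑ i, sgn (s i) • w i) (∑ i, sgn (s i) • w i)) := by
  classical
  -- derived bilinearity facts
  have Baddr : ∀ a b c, B a (b + c) = B a b + B a c := by
    intro a b c; rw [Bsymm, Baddl, Bsymm b a, Bsymm c a]
  have Bsmulr : ∀ (t : ℝ) a b, B a (t • b) = t * B a b := by
    intro t a b; rw [Bsymm, Bsmull, Bsymm b a]
  have Bsuml : ∀ {N : ℕ} (v : Fin N → E) (c : E), B (∑ j, v j) c = ∑ j, B (v j) c := by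
    intro N v c
    exact map_sum (AddMonoidHom.mk' (fun a => B a c) (fun a b => Baddl a b c)) v Finset.univ
  have Bsubl : ∀ a b c, B (a - b) c = B a c - B b c := by
    intro a b c
    have : a - b = a + (-1 : ℝ) • b := by rw [neg_one_smul]; abel
    rw [this, Baddl, Bsmull]; ring
  have Bsubr : ∀ a b c, B a (b - c) = B a b - B a c := by
    intro a b c; rw [Bsymm, Bsubl, Bsymm b a, Bsymm c a]
  -- Cauchy-Schwarz
  have CS : ∀ a b, B a b * B a b ≤ B a a * B b b := by
    intro a b
    have key : ∀ t : ℝ, 0 ≤ B b b * (t * t) + (2 * B a b) * t + B a a := by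
      intro t
      have h := Bpos (a + t • b)
      have hexp : B (a + t • b) (a + t • b)
          = B b b * (t * t) + (2 * B a b) * t + B a a := by
        rw [Baddl, Baddr, Baddr, Bsmull, Bsmulr, Bsmulr, Bsmull, Bsymm b a]
        ring
      linarith [hexp ▸ h]
    have hd := discrim_le_zero key
    rw [discrim] at hd
    nlinarith [hd]
  have CS' : ∀ a b, B a b ≤ Real.sqrt (B a a) * Real.sqrt (B b b) := by
    intro a b
    have h1 : B a b ≤ Real.sqrt (B a b * B a b) := by
      rw [Real.sqrt_mul_self_eq_abs]; exact le_abs_self _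
    have h2 : Real.sqrt (B a b * B a b) ≤ Real.sqrt (B a a * B b b) :=
      Real.sqrt_le_sqrt (CS a b)
    rw [Real.sqrt_mul (Bpos a)] at h2
    linarith
  have tri : ∀ a b, (Real.sqrt (B a a) - Real.sqrt (B b b)) ^ 2 ≤ B (a - b) (a - b) := by
    intro a b
    have h1 : B (a - b) (a - b) = B a a - 2 * B a b + B b b := by
      rw [Bsubl, Bsubr, Bsubr, Bsymm b a]; ring
    have h2 := CS' a b
    have h3 : Real.sqrt (B a a) ^ 2 = B a a := Real.sq_sqrt (Bpos a)
    have h4 : Real.sqrt (B b b) ^ 2 = B b b := Real.sq_sqrt (Bpos b)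
    nlinarith
  -- setup
  set W : (Fin n → Bool) → E := fun s => ∑ i, sgn (s i) • w i with hW
  set f : (Fin n → Bool) → ℝ := fun s => Real.sqrt (B (W s) (W s)) with hf
  have hsq : ∀ s, f s ^ 2 = B (W s) (W s) := fun s => Real.sq_sqrt (Bpos _)
  have hf0 : ∀ s, 0 ≤ f s := fun s => Real.sqrt_nonneg _
  -- evenness
  have hWneg : ∀ s, W (negAll s) = (-1 : ℝ) • W s := by
    intro s
    rw [hW]
    simp only [Finset.smul_sum]
    apply Finset.sum_congr rfl
    intro i _
    rw [smul_smul, negAll, sgn_not]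
    ring_nf
  have heven : ∀ s, f (negAll s) = f s := by
    intro s
    simp only [hf, hWneg, Bsmull, Bsmulr]
    ring_nf
  -- difference structure
  have hWflip : ∀ (i : Fin n) s, W s - W (flip i s) = (2 * sgn (s i)) • w i := by
    intro i s
    rw [hW]
    simp only
    rw [← Finset.sum_sub_distrib]
    have : ∀ j, sgn (s j) • w j - sgn (flip i s j) • w j
        = (sgn (s j) - sgn (flip i s j)) • w j := by
      intro j; rw [sub_smul]
    simp_rw [this]
    rw [Finset.sum_eq_single_of_mem i (Finset.mem_univ i)]
    · have : flip i s i = !(s i) := by simp [flip]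
      rw [this, sgn_not]
      congr 1
      ring
    · intro j _ hj
      have : flip i s j = s j := by simp [flip, Function.update_of_ne hj]
      rw [this, sub_self, zero_smul]
  have hdiff : ∀ (i : Fin n) s, (f s - f (flip i s)) ^ 2 ≤ 4 * B (w i) (w i) := by
    intro i s
    have h1 := tri (W s) (W (flip i s))
    rw [hWflip i s, Bsmull, Bsmulr] at h1
    have h2 : 2 * sgn (s i) * (2 * sgn (s i) * B (w i) (w i)) = 4 * B (w i) (w i) := by
      have := sgn_mul_self (s i)
      nlinarith [this]
    rw [h2] at h1
    exact h1
  -- second moment identity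
  have sum_sgn_mul : ∀ i j : Fin n,
      ∑ s : Fin n → Bool, sgn (s i) * sgn (s j) = if i = j then (2 ^ n : ℝ) else 0 := by
    intro i j
    have h := wal_orth ({i} : Finset (Fin n)) {j}
    simp only [wal, Finset.prod_singleton] at h
    rw [h]
    congr 1
    simp [Finset.singleton_inj]
  have hexpand : ∀ s, B (W s) (W s) = ∑ i, ∑ j, sgn (s i) * sgn (s j) * B (w i) (w j) := by
    intro s
    rw [hW]
    simp only
    rw [Bsuml]
    apply Finset.sum_congr rfl
    intro i _
    rw [Bsmull, Bsymm, Bsuml, Finset.mul_sum]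
    apply Finset.sum_congr rfl
    intro j _
    rw [Bsmull, Bsymm (w j) (w i)]
    ring
  have hEf2 : ∑ s : Fin n → Bool, f s ^ 2 = 2 ^ n * ∑ i, B (w i) (w i) := by
    simp_rw [hsq, hexpand]
    rw [Finset.sum_comm]
    have : ∀ i : Fin n, ∑ s : Fin n → Bool, ∑ j, sgn (s i) * sgn (s j) * B (w i) (w j)
        = 2 ^ n * B (w i) (w i) := by
      intro i
      rw [Finset.sum_comm]
      have h1 : ∀ j : Fin n, ∑ s : Fin n → Bool, sgn (s i) * sgn (s j) * B (w i) (w j)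
          = (if i = j then (2 ^ n : ℝ) else 0) * B (w i) (w j) := by
        intro j
        rw [← sum_sgn_mul i j, Finset.sum_mul]
      simp_rw [h1, ite_mul, zero_mul]
      rw [Finset.sum_ite_eq]
      simp
    rw [Finset.sum_congr rfl (fun i _ => this i), ← Finset.mul_sum]
  -- Fourier of f
  set F : Finset (Fin n) → ℝ := coef f with hF
  have hFodd : ∀ A : Finset (Fin n), Odd A.card → F A = 0 :=
    fun A hA => coef_even_odd heven hA
  have hGi : ∀ (i : Fin n) A, coef (fun s => f s - f (flip i s)) A
      = if i ∈ A then 2 * F A else 0 := by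
    intro i A
    rw [coef_sub, coef_flip]
    split_ifs with hi <;> ring
  have hparsg : ∀ i : Fin n, 2 ^ n * ∑ s : Fin n → Bool, (f s - f (flip i s)) ^ 2
      = ∑ A : Finset (Fin n), (if i ∈ A then 4 * F A ^ 2 else 0) := by
    intro i
    have h := parseval (fun s => f s - f (flip i s)) (fun s => f s - f (flip i s))
    simp_rw [hGi, ← sq] at h
    rw [← h]
    apply Finset.sum_congr rfl
    intro A _
    split_ifs <;> ring_nf
  -- Poincare inequality
  have hpoinc : 8 * (2 ^ n * ∑ s : Fin n → Bool, f s ^ 2 - (∑ s : Fin n → Bool, f s) ^ 2)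
      ≤ 2 ^ n * ∑ i : Fin n, ∑ s : Fin n → Bool, (f s - f (flip i s)) ^ 2 := by
    have hstep1 : 2 ^ n * ∑ i : Fin n, ∑ s : Fin n → Bool, (f s - f (flip i s)) ^ 2
        = ∑ A : Finset (Fin n), 4 * (A.card : ℝ) * F A ^ 2 := by
      rw [Finset.mul_sum]
      simp_rw [hparsg]
      rw [Finset.sum_comm]
      apply Finset.sum_congr rfl
      intro A _
      rw [Finset.sum_ite_mem, Finset.univ_inter, Finset.sum_const, nsmul_eq_mul]
      ring
    have hstep2 : ∀ A : Finset (Fin n),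
        (if A = ∅ then 0 else 8 * F A ^ 2) ≤ 4 * (A.card : ℝ) * F A ^ 2 := by
      intro A
      split_ifs with h
      · positivity
      · by_cases hF0 : F A = 0
        · rw [hF0]; ring_nf; simp
        · have hcard : 2 ≤ A.card := by
            rcases Nat.lt_or_ge A.card 2 with hc | hc
            · interval_cases h' : A.card
              · exact absurd (Finset.card_eq_zero.mp h') h
              · exact absurd (hFodd A (by rw [h']; exact odd_one)) hF0
            · exact hc
          have : (4:ℝ) * 2 ≤ 4 * (A.card : ℝ) := by
            have : (2:ℝ) ≤ (A.card : ℝ) := by exact_mod_cast hcard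
            linarith
          nlinarith [sq_nonneg (F A)]
    have hstep3 : ∑ A : Finset (Fin n), (if A = ∅ then 0 else 8 * F A ^ 2)
        = 8 * (∑ A : Finset (Fin n), F A ^ 2) - 8 * F ∅ ^ 2 := by
      have : ∀ A : Finset (Fin n), (if A = ∅ then 0 else 8 * F A ^ 2)
          = 8 * F A ^ 2 - (if (∅ : Finset (Fin n)) = A then 8 * F A ^ 2 else 0) := by
        intro A
        by_cases h : A = ∅
        · subst h; simp
        · rw [if_neg h, if_neg (fun hh => h hh.symm)]; ring
      simp_rw [this]
      rw [Finset.sum_sub_distrib, ← Finset.mul_sum, Finset.sum_ite_eq]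
      simp
    have hpars : ∑ A : Finset (Fin n), F A ^ 2 = 2 ^ n * ∑ s : Fin n → Bool, f s ^ 2 := by
      have h := parseval f f
      simp_rw [← sq] at h
      exact h
    have hF0 : F ∅ = ∑ s : Fin n → Bool, f s := coef_wal_empty f
    calc 8 * (2 ^ n * ∑ s : Fin n → Bool, f s ^ 2 - (∑ s : Fin n → Bool, f s) ^ 2)
        = ∑ A : Finset (Fin n), (if A = ∅ then 0 else 8 * F A ^ 2) := by
          rw [hstep3, hpars, hF0]; ring
      _ ≤ ∑ A : Finset (Fin n), 4 * (A.card : ℝ) * F A ^ 2 := Finset.sum_le_sum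
          (fun A _ => hstep2 A)
      _ = 2 ^ n * ∑ i : Fin n, ∑ s : Fin n → Bool, (f s - f (flip i s)) ^ 2 := hstep1.symm
  -- combine
  set T : ℝ := ∑ i, B (w i) (w i) with hT
  have hT0 : 0 ≤ T := Finset.sum_nonneg (fun i _ => Bpos _)
  set P : ℝ := ∑ s : Fin n → Bool, f s with hP
  have hP0 : 0 ≤ P := Finset.sum_nonneg (fun s _ => hf0 s)
  set c : ℝ := (2 : ℝ) ^ n with hc
  have hcpos : (0:ℝ) < c := by positivity
  have hchain1 : ∑ i : Fin n, ∑ s : Fin n → Bool, (f s - f (flip i s)) ^ 2 ≤ c * (4 * T) := by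
    have : ∀ i : Fin n, ∑ s : Fin n → Bool, (f s - f (flip i s)) ^ 2
        ≤ c * (4 * B (w i) (w i)) := by
      intro i
      calc ∑ s : Fin n → Bool, (f s - f (flip i s)) ^ 2
          ≤ ∑ _s : Fin n → Bool, 4 * B (w i) (w i) :=
            Finset.sum_le_sum (fun s _ => hdiff i s)
        _ = c * (4 * B (w i) (w i)) := by
            rw [Finset.sum_const, nsmul_eq_mul]
            congr 1
            simp [hc, Finset.card_univ]
    calc ∑ i : Fin n, ∑ s : Fin n → Bool, (f s - f (flip i s)) ^ 2
        ≤ ∑ i : Fin n, c * (4 * B (w i) (w i)) := Finset.sum_le_sum (fun i _ => this i)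
      _ = c * (4 * T) := by
          rw [hT, Finset.mul_sum, Finset.mul_sum]
  have hQ : ∑ s : Fin n → Bool, f s ^ 2 = c * T := hEf2
  have hPsq : c * c * T / 2 ≤ P ^ 2 := by
    have h1 := hpoinc
    rw [hQ] at h1
    nlinarith [hchain1, hcpos]
  have hsqrtP : c * Real.sqrt T / Real.sqrt 2 ≤ P := by
    have hval : (c * Real.sqrt T / Real.sqrt 2) ^ 2 = c * c * T / 2 := by
      rw [div_pow, mul_pow, Real.sq_sqrt hT0, Real.sq_sqrt (by norm_num : (0:ℝ) ≤ 2)]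
      ring
    have hnn : 0 ≤ c * Real.sqrt T / Real.sqrt 2 := by positivity
    calc c * Real.sqrt T / Real.sqrt 2
        = Real.sqrt ((c * Real.sqrt T / Real.sqrt 2) ^ 2) := (Real.sqrt_sq hnn).symm
      _ = Real.sqrt (c * c * T / 2) := by rw [hval]
      _ ≤ Real.sqrt (P ^ 2) := Real.sqrt_le_sqrt hPsq
      _ = P := Real.sqrt_sq hP0
  have hgoal : Real.sqrt T / Real.sqrt 2 ≤ (1 / c) * P := by
    rw [one_div, ← div_eq_inv_mul, le_div_iff₀ hcpos]
    calc Real.sqrt T / Real.sqrt 2 * c = c * Real.sqrt T / Real.sqrt 2 := by ring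
      _ ≤ P := hsqrtP
  exact hgoal

lemma final_arith {r nn t u : ℝ} (hn : 0 < nn) (hru : r * (t / Real.sqrt 2) ≤ u) :
    r / (nn * Real.sqrt 2) * t ≤ (1 / nn) * u := by
  have hs2 : (0:ℝ) < Real.sqrt 2 := by positivity
  have h1 : r / (nn * Real.sqrt 2) * t = (1 / nn) * (r * (t / Real.sqrt 2)) := by
    field_simp
  rw [h1]
  exact mul_le_mul_of_nonneg_left hru (by positivity)

end Stmt17Aux

open Matrix
open scoped RealInnerProductSpace

/-- Lower bound (via Khintchine–Kahane) on the empirical Rademacher complexity of the manifold-regularized ball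
`H̃_r = {f | ⟨f,f⟩ + μ f_Uᵀ L f_U ≤ r²}`, measured on the first `n` of the `n + m` points:
`Rad_n(H̃_r) ≥ (r/(n√2)) √(Σᵢ₌₁ⁿ [k(xᵢ,xᵢ) - k_{xᵢ}ᵀ (μ⁻¹ I + L K)⁻¹ L k_{xᵢ}])`. -/
theorem stmt17 {H X : Type*} [NormedAddCommGroup H] [InnerProductSpace ℝ H]
    (ev : H →ₗ[ℝ] X → ℝ) (hev : Function.Injective ev)
    (k : X → X → ℝ) (Krep : X → H)
    (hmem : ∀ y, ev (Krep y) = fun z => k z y)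
    (hrep : ∀ (y : X) (f : H), ⟪Krep y, f⟫ = ev f y)
    (n m : ℕ) (hn : 0 < n) (x : Fin (n + m) → X)
    (L : Matrix (Fin (n + m)) (Fin (n + m)) ℝ) (hL : L.PosSemidef)
    (μ : ℝ) (hμ : 0 < μ)
    (K : Matrix (Fin (n + m)) (Fin (n + m)) ℝ) (hK : ∀ i j, K i j = k (x i) (x j))
    (M : Matrix (Fin (n + m)) (Fin (n + m)) ℝ)
    (hM : M = μ⁻¹ • (1 : Matrix (Fin (n + m)) (Fin (n + m)) ℝ) + L * K)
    (hMinv : IsUnit M)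
    (fU : H → Fin (n + m) → ℝ) (hfU : ∀ f i, fU f i = ev f (x i))
    (kvec : X → Fin (n + m) → ℝ) (hkvec : ∀ y i, kvec y i = k (x i) y)
    (r : ℝ) (hr : 0 < r) :
    (1 / n : ℝ) * ((1 / 2 ^ n : ℝ) * ∑ s : Fin n → Bool,
        sSup {v : ℝ | ∃ f : H, ⟪f, f⟫ + μ * (fU f ⬝ᵥ L *ᵥ fU f) ≤ r ^ 2 ∧
          v = ∑ i : Fin n, (if s i then (1 : ℝ) else -1) * ev f (x (Fin.castAdd m i))}) ≥
      (r / (n * Real.sqrt 2)) * Real.sqrt (∑ i : Fin n,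
        (k (x (Fin.castAdd m i)) (x (Fin.castAdd m i)) -
          kvec (x (Fin.castAdd m i)) ⬝ᵥ M⁻¹ *ᵥ (L *ᵥ kvec (x (Fin.castAdd m i))))) := by
  classical
  have hn' : (0:ℝ) < n := by exact_mod_cast hn
  -- symmetry of k
  have kinner : ∀ a b, k a b = ⟪Krep a, Krep b⟫ := by
    intro a b
    have h := hrep a (Krep b)
    rw [hmem b] at h
    exact h.symm
  have ksymm : ∀ a b, k a b = k b a := by
    intro a b; rw [kinner, kinner, real_inner_comm]
  -- symmetry of L
  have hLsym : ∀ i j, L i j = L j i := by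
    intro i j
    have h := congrFun (congrFun hL.1 j) i
    simpa [Matrix.conjTranspose_apply] using h
  have hquad : ∀ u v : Fin (n+m) → ℝ, u ⬝ᵥ L *ᵥ v = v ⬝ᵥ L *ᵥ u := by
    intro u v
    simp only [dotProduct, Matrix.mulVec, Finset.mul_sum]
    rw [Finset.sum_comm]
    apply Finset.sum_congr rfl
    intro i _
    apply Finset.sum_congr rfl
    intro j _
    rw [hLsym i j]; ring
  -- linearity of fU
  have fU_add : ∀ a b, fU (a + b) = fU a + fU b := by
    intro a b; funext i
    rw [hfU, map_add]
    simp [hfU]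
  have fU_smul : ∀ (t:ℝ) a, fU (t • a) = t • fU a := by
    intro t a; funext i
    rw [hfU, LinearMap.map_smul]
    simp [hfU]
  -- the modified bilinear form
  set B : H → H → ℝ := fun f g => ⟪f, g⟫ + μ * (fU f ⬝ᵥ L *ᵥ fU g) with hBdef
  have hBval : ∀ f g, B f g = ⟪f, g⟫ + μ * (fU f ⬝ᵥ L *ᵥ fU g) := fun f g => rfl
  have Bsymm : ∀ a b, B a b = B b a := by
    intro a b; rw [hBval, hBval, real_inner_comm, hquad]
  have Baddl : ∀ a b c, B (a + b) c = B a c + B b c := by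
    intro a b c
    rw [hBval, hBval, hBval, inner_add_left, fU_add, add_dotProduct]
    ring
  have Bsmull : ∀ (t:ℝ) a b, B (t • a) b = t * B a b := by
    intro t a b
    rw [hBval, hBval, real_inner_smul_left, fU_smul, smul_dotProduct]
    simp only [smul_eq_mul]
    ring
  have Bpos : ∀ a, 0 ≤ B a a := by
    intro a
    rw [hBval]
    have h1 : 0 ≤ ⟪a, a⟫ := real_inner_self_nonneg
    have h2 : 0 ≤ fU a ⬝ᵥ L *ᵥ fU a := by
      have h := hL.dotProduct_mulVec_nonneg (fU a)
      simpa using h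
    have := mul_nonneg hμ.le h2
    linarith
  have Bsmulr : ∀ (t:ℝ) a b, B a (t • b) = t * B a b := by
    intro t a b; rw [Bsymm, Bsmull, Bsymm b a]
  have CS' : ∀ a b, B a b ≤ Real.sqrt (B a a) * Real.sqrt (B b b) :=
    Stmt17Aux.bilin_cs B Bsymm Baddl Bsmull Bpos
  -- the representer of evaluation for B
  set c : X → Fin (n+m) → ℝ := fun y => M⁻¹ *ᵥ (L *ᵥ kvec y) with hcdef
  set G : X → H := fun y => Krep y - ∑ j, c y j • Krep (x j) with hGdef
  have hterm : ∀ (w z : X), ev (Krep w) z = k z w := fun w z => by rw [hmem w]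
  have evG : ∀ y z, ev (G y) z = k z y - ∑ j, c y j * k z (x j) := by
    intro y z
    rw [hGdef]
    simp only [map_sub, map_sum, LinearMap.map_smul, Pi.sub_apply, Finset.sum_apply,
      Pi.smul_apply, smul_eq_mul, hterm]
  have fUG : ∀ y, fU (G y) = kvec y - K *ᵥ c y := by
    intro y; funext i
    rw [hfU, evG]
    simp only [Pi.sub_apply]
    rw [hkvec]
    congr 1
    simp only [Matrix.mulVec, dotProduct]
    apply Finset.sum_congr rfl
    intro j _
    rw [hK]; ring
  have hMM : M * M⁻¹ = 1 := Matrix.mul_nonsing_inv M ((Matrix.isUnit_iff_isUnit_det M).1 hMinv)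
  have hMc : ∀ y, M *ᵥ c y = L *ᵥ kvec y := by
    intro y
    rw [hcdef]
    simp only
    rw [Matrix.mulVec_mulVec, hMM, Matrix.one_mulVec]
  have hcid : ∀ y, c y = μ • (L *ᵥ kvec y - L *ᵥ (K *ᵥ c y)) := by
    intro y
    have h1 := hMc y
    rw [hM, Matrix.add_mulVec, Matrix.smul_mulVec, Matrix.one_mulVec,
      ← Matrix.mulVec_mulVec] at h1
    funext i
    have h2 := congrFun h1 i
    simp only [Pi.add_apply, Pi.smul_apply, smul_eq_mul] at h2
    simp only [Pi.smul_apply, Pi.sub_apply, smul_eq_mul]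
    have h3 : μ * (μ⁻¹ * c y i) = c y i := by
      rw [← mul_assoc, mul_inv_cancel₀ hμ.ne', one_mul]
    nlinarith [h2, h3]
  have Brep : ∀ (y : X) (f : H), B f (G y) = ev f y := by
    intro y f
    have hin : ⟪f, G y⟫ = ev f y - fU f ⬝ᵥ c y := by
      have e1 : ∀ w : X, (⟪f, Krep w⟫ : ℝ) = ev f w := fun w => by
        rw [real_inner_comm]; exact hrep w f
      rw [hGdef]
      simp only
      rw [inner_sub_right, inner_sum]
      simp_rw [real_inner_smul_right, e1]
      congr 1
      rw [dotProduct_comm]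
      simp only [dotProduct]
      apply Finset.sum_congr rfl
      intro j _
      rw [hfU]
    rw [hBval, hin, fUG]
    have h4 : fU f ⬝ᵥ c y = μ * (fU f ⬝ᵥ (L *ᵥ kvec y - L *ᵥ (K *ᵥ c y))) := by
      conv_lhs => rw [hcid y]
      rw [dotProduct_smul]
      simp [smul_eq_mul]
    rw [Matrix.mulVec_sub]
    linarith [h4]
  have BGG : ∀ y, B (G y) (G y)
      = k y y - kvec y ⬝ᵥ M⁻¹ *ᵥ (L *ᵥ kvec y) := by
    intro y
    rw [Brep y (G y), evG]
    have h5 : ∀ j, k y (x j) = kvec y j := fun j => by rw [hkvec, ksymm]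
    simp_rw [h5]
    have h6 : ∑ j, c y j * kvec y j = kvec y ⬝ᵥ c y := by
      rw [dotProduct_comm]
      rfl
    rw [h6, hcdef]
  -- the Rademacher vectors
  set g : Fin n → H := fun i => G (x (Fin.castAdd m i)) with hgdef
  have hBfW : ∀ (f : H) (s : Fin n → Bool),
      ∑ i : Fin n, (if s i then (1:ℝ) else -1) * ev f (x (Fin.castAdd m i))
        = B f (∑ i, Stmt17Aux.sgn (s i) • g i) := by
    intro f s
    have h0 : B (∑ i, Stmt17Aux.sgn (s i) • g i) f
        = ∑ i, B (Stmt17Aux.sgn (s i) • g i) f :=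
      map_sum (AddMonoidHom.mk' (fun a => B a f) (fun a b => Baddl a b f))
        (fun i => Stmt17Aux.sgn (s i) • g i) Finset.univ
    have h1 : B f (∑ i, Stmt17Aux.sgn (s i) • g i)
        = ∑ i, Stmt17Aux.sgn (s i) * B f (g i) := by
      rw [Bsymm, h0]
      apply Finset.sum_congr rfl
      intro i _
      rw [Bsmull, Bsymm (g i) f]
    rw [h1]
    apply Finset.sum_congr rfl
    intro i _
    rw [hgdef]
    simp only
    rw [Brep]
    rfl
  -- lower bound for each sSup
  have hSup : ∀ s : Fin n → Bool,
      r * Real.sqrt (B (∑ i, Stmt17Aux.sgn (s i) • g i) (∑ i, Stmt17Aux.sgn (s i) • g i))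
        ≤ sSup {v : ℝ | ∃ f : H, ⟪f, f⟫ + μ * (fU f ⬝ᵥ L *ᵥ fU f) ≤ r ^ 2 ∧
          v = ∑ i : Fin n, (if s i then (1 : ℝ) else -1) * ev f (x (Fin.castAdd m i))} := by
    intro s
    set Ws : H := ∑ i, Stmt17Aux.sgn (s i) • g i with hWs
    have hQ0 : 0 ≤ B Ws Ws := Bpos Ws
    have hbdd : BddAbove {v : ℝ | ∃ f : H, ⟪f, f⟫ + μ * (fU f ⬝ᵥ L *ᵥ fU f) ≤ r ^ 2 ∧
        v = ∑ i : Fin n, (if s i then (1 : ℝ) else -1) * ev f (x (Fin.castAdd m i))} := by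
      refine ⟨r * Real.sqrt (B Ws Ws), ?_⟩
      rintro v ⟨f, hf1, rfl⟩
      rw [hBfW f s, ← hWs]
      have hff : B f f ≤ r ^ 2 := hf1
      calc B f Ws ≤ Real.sqrt (B f f) * Real.sqrt (B Ws Ws) := CS' f Ws
        _ ≤ r * Real.sqrt (B Ws Ws) := by
            apply mul_le_mul_of_nonneg_right _ (Real.sqrt_nonneg _)
            calc Real.sqrt (B f f) ≤ Real.sqrt (r ^ 2) := Real.sqrt_le_sqrt hff
              _ = r := Real.sqrt_sq hr.le
    apply le_csSup hbdd
    by_cases hQ : B Ws Ws = 0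
    · refine ⟨0, ?_, ?_⟩
      · have hB00 : B (0:H) 0 = 0 := by
          have := Bsmull 0 0 0
          rw [zero_smul] at this
          simpa using this
        have : (⟪(0:H), (0:H)⟫ + μ * (fU 0 ⬝ᵥ L *ᵥ fU 0)) = B (0:H) 0 := rfl
        rw [this, hB00]
        positivity
      · rw [hQ, Real.sqrt_zero, mul_zero]
        simp
    · have hQpos : 0 < B Ws Ws := lt_of_le_of_ne hQ0 (Ne.symm hQ)
      have hsq : Real.sqrt (B Ws Ws) > 0 := Real.sqrt_pos.2 hQpos
      refine ⟨(r / Real.sqrt (B Ws Ws)) • Ws, ?_, ?_⟩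
      · have hB : B ((r / Real.sqrt (B Ws Ws)) • Ws) ((r / Real.sqrt (B Ws Ws)) • Ws)
            = (r / Real.sqrt (B Ws Ws)) * ((r / Real.sqrt (B Ws Ws)) * B Ws Ws) := by
          rw [Bsmull, Bsmulr]
        have hval : (r / Real.sqrt (B Ws Ws)) * ((r / Real.sqrt (B Ws Ws)) * B Ws Ws)
            = r ^ 2 := by
          have hss : Real.sqrt (B Ws Ws) * Real.sqrt (B Ws Ws) = B Ws Ws :=
            Real.mul_self_sqrt hQ0
          field_simp
          nlinarith [hss]
        have : (⟪(r / Real.sqrt (B Ws Ws)) • Ws, (r / Real.sqrt (B Ws Ws)) • Ws⟫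
            + μ * (fU ((r / Real.sqrt (B Ws Ws)) • Ws) ⬝ᵥ L *ᵥ fU ((r / Real.sqrt (B Ws Ws)) • Ws)))
            = B ((r / Real.sqrt (B Ws Ws)) • Ws) ((r / Real.sqrt (B Ws Ws)) • Ws) := rfl
        rw [this, hB, hval]
      · rw [hBfW _ s, ← hWs, Bsmull]
        have hss : Real.sqrt (B Ws Ws) * Real.sqrt (B Ws Ws) = B Ws Ws :=
          Real.mul_self_sqrt hQ0
        field_simp
        nlinarith [hss]
  -- Khintchine-Kahane
  have hkk := Stmt17Aux.kk B Bsymm Baddl Bsmull Bpos g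
  -- rewrite the target sum
  have hTT : (∑ i : Fin n,
      (k (x (Fin.castAdd m i)) (x (Fin.castAdd m i)) -
        kvec (x (Fin.castAdd m i)) ⬝ᵥ M⁻¹ *ᵥ (L *ᵥ kvec (x (Fin.castAdd m i)))))
      = ∑ i, B (g i) (g i) := by
    apply Finset.sum_congr rfl
    intro i _
    rw [hgdef]
    simp only
    rw [BGG]
  rw [ge_iff_le, hTT]
  -- assemble
  have h6 : r * ((1 / 2 ^ n : ℝ) * ∑ s : Fin n → Bool,
      Real.sqrt (B (∑ i, Stmt17Aux.sgn (s i) • g i) (∑ i, Stmt17Aux.sgn (s i) • g i)))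
      ≤ (1 / 2 ^ n : ℝ) * ∑ s : Fin n → Bool,
        sSup {v : ℝ | ∃ f : H, ⟪f, f⟫ + μ * (fU f ⬝ᵥ L *ᵥ fU f) ≤ r ^ 2 ∧
          v = ∑ i : Fin n, (if s i then (1 : ℝ) else -1) * ev f (x (Fin.castAdd m i))} := by
    have hsum : ∑ s : Fin n → Bool,
        r * Real.sqrt (B (∑ i, Stmt17Aux.sgn (s i) • g i) (∑ i, Stmt17Aux.sgn (s i) • g i))
        ≤ ∑ s : Fin n → Bool,
          sSup {v : ℝ | ∃ f : H, ⟪f, f⟫ + μ * (fU f ⬝ᵥ L *ᵥ fU f) ≤ r ^ 2 ∧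
            v = ∑ i : Fin n, (if s i then (1 : ℝ) else -1) * ev f (x (Fin.castAdd m i))} :=
      Finset.sum_le_sum (fun s _ => hSup s)
    calc r * ((1 / 2 ^ n : ℝ) * ∑ s : Fin n → Bool,
        Real.sqrt (B (∑ i, Stmt17Aux.sgn (s i) • g i) (∑ i, Stmt17Aux.sgn (s i) • g i)))
        = (1 / 2 ^ n : ℝ) * ∑ s : Fin n → Bool,
          r * Real.sqrt (B (∑ i, Stmt17Aux.sgn (s i) • g i) (∑ i, Stmt17Aux.sgn (s i) • g i)) := by
          rw [Finset.mul_sum]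
          rw [Finset.mul_sum]
          rw [Finset.mul_sum]
          apply Finset.sum_congr rfl
          intro s _
          ring
      _ ≤ (1 / 2 ^ n : ℝ) * ∑ s : Fin n → Bool,
          sSup {v : ℝ | ∃ f : H, ⟪f, f⟫ + μ * (fU f ⬝ᵥ L *ᵥ fU f) ≤ r ^ 2 ∧
            v = ∑ i : Fin n, (if s i then (1 : ℝ) else -1) * ev f (x (Fin.castAdd m i))} := by
          apply mul_le_mul_of_nonneg_left hsum
          positivity
  have h7 : r * (Real.sqrt (∑ i, B (g i) (g i)) / Real.sqrt 2)
      ≤ r * ((1 / 2 ^ n : ℝ) * ∑ s : Fin n → Bool,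
        Real.sqrt (B (∑ i, Stmt17Aux.sgn (s i) • g i) (∑ i, Stmt17Aux.sgn (s i) • g i))) :=
    mul_le_mul_of_nonneg_left hkk hr.le
  exact Stmt17Aux.final_arith hn' (h7.trans h6)
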